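/- Let ρ_AB be a density matrix on ℂ^m⊗ℂ^n and let ρ_BA denote its swap, the density matrix on ℂ^n⊗ℂ^m with entries (ρ_BA)_{(j,i),(j',i')} = (ρ_AB)_{(i,j),(i',j')}. Then N_H^b(ρ_BA⊗ρ_AB) ≥ N_H(ρ_AB); here the middle two tensor factors of ρ_BA⊗ρ_AB are both copies of ℂ^m carrying the marginal ρ_A. -/

import Mathlib

open scoped Matrix Kronecker BigOperators ComplexOrder
open Matrix

/-- The positive-semidefinite square root of a PSD matrix (0 if not PSD). -/
noncomputable def psdSqrt {N : Type*} [Fintype N] [DecidableEq N] (A : Matrix N N ℂ) :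
    Matrix N N ℂ :=
  open scoped Classical in
  if h : A.PosSemidef then (h.1.eigenvectorUnitary : Matrix N N ℂ) *
    diagonal ((↑) ∘ (√·) ∘ h.1.eigenvalues) * (star h.1.eigenvectorUnitary : Matrix N N ℂ) else 0

/-- Squared Frobenius (Hilbert–Schmidt) norm: `‖X‖² = tr (Xᴴ X)`. -/
noncomputable def hsNormSq {N : Type*} [Fintype N] (X : Matrix N N ℂ) : ℝ :=
  (Matrix.trace (Xᴴ * X)).re

/-- A density matrix: positive semidefinite with unit trace. -/
def IsDensity {N : Type*} [Fintype N] [DecidableEq N] (ρ : Matrix N N ℂ) : Prop :=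
  ρ.PosSemidef ∧ ρ.trace = 1

/-- Standard inner product on `ℂ^N`. -/
noncomputable def cInner {N : Type*} [Fintype N] (x y : N → ℂ) : ℂ :=
  ∑ i, star (x i) * y i

/-- Outer product `ψ ψ†`. -/
noncomputable def outer {N : Type*} (ψ : N → ℂ) : Matrix N N ℂ :=
  Matrix.vecMulVec ψ (star ψ)

/-- The family of unit vectors of a rank-one von Neumann measurement: an orthonormal basis,
indexed by the dimension. -/
def IsVNM {N : Type*} [Fintype N] [DecidableEq N] (u : N → N → ℂ) : Prop :=
  ∀ a b, cInner (u a) (u b) = if a = b then (1 : ℂ) else 0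

/-- The rank-one projection `Π_h = u_h u_h†` of a measurement. -/
noncomputable def projOf {N : Type*} (u : N → N → ℂ) (h : N) : Matrix N N ℂ :=
  outer (u h)

/-- The measurement `{u_h u_h†}` fixes `σ`: `Σ_h Π_h σ Π_h = σ`. -/
def FixesVNM {N : Type*} [Fintype N] (u : N → N → ℂ) (σ : Matrix N N ℂ) : Prop :=
  ∑ h, projOf u h * σ * projOf u h = σ

/-- Reduced state of the second factor: `(ρ_B)_{j j'} = Σ_i ρ_{(i,j),(i,j')}`. -/
noncomputable def redB {m n : ℕ} (ρ : Matrix (Fin m × Fin n) (Fin m × Fin n) ℂ) :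
    Matrix (Fin n) (Fin n) ℂ :=
  Matrix.of fun j j' => ∑ i, ρ (i, j) (i, j')

/-- Reduced state of the first factor: `(ρ_C)_{k k'} = Σ_l ρ_{(k,l),(k',l)}`. -/
noncomputable def redC {u v : ℕ} (ρ : Matrix (Fin u × Fin v) (Fin u × Fin v) ℂ) :
    Matrix (Fin u) (Fin u) ℂ :=
  Matrix.of fun k k' => ∑ l, ρ (k, l) (k', l)

/-- `I_m ⊗ P ⊗ I_v` acting on the middle two factors. -/
noncomputable def ampMid (m v : ℕ) {n u : ℕ} (P : Matrix (Fin n × Fin u) (Fin n × Fin u) ℂ) :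
    Matrix ((Fin m × Fin n) × Fin u × Fin v) ((Fin m × Fin n) × Fin u × Fin v) ℂ :=
  Matrix.of fun p q =>
    (if p.1.1 = q.1.1 then (1 : ℂ) else 0) * P (p.1.2, p.2.1) (q.1.2, q.2.1) *
      (if p.2.2 = q.2.2 then (1 : ℂ) else 0)

/-- The map `Π^{BC}(X) = Σ_h (I_m ⊗ Π_h ⊗ I_v) X (I_m ⊗ Π_h ⊗ I_v)`. -/
noncomputable def pinchBC {m n u v : ℕ} (w : (Fin n × Fin u) → (Fin n × Fin u) → ℂ)
    (X : Matrix ((Fin m × Fin n) × Fin u × Fin v) ((Fin m × Fin n) × Fin u × Fin v) ℂ) :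
    Matrix ((Fin m × Fin n) × Fin u × Fin v) ((Fin m × Fin n) × Fin u × Fin v) ℂ :=
  ∑ h, ampMid m v (projOf w h) * X * ampMid m v (projOf w h)

/-- The measurement-induced nonbilocality `N_H^b(ρ_AB ⊗ ρ_CD)`. -/
noncomputable def NHb {m n u v : ℕ}
    (ρAB : Matrix (Fin m × Fin n) (Fin m × Fin n) ℂ)
    (ρCD : Matrix (Fin u × Fin v) (Fin u × Fin v) ℂ) : ℝ :=
  sSup { r : ℝ | ∃ w : (Fin n × Fin u) → (Fin n × Fin u) → ℂ,
    IsVNM w ∧ FixesVNM w (redB ρAB ⊗ₖ redC ρCD) ∧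
    r = hsNormSq (psdSqrt (ρAB ⊗ₖ ρCD) - pinchBC w (psdSqrt (ρAB ⊗ₖ ρCD))) }

/-- The map `X ↦ Σ_k (Π_k ⊗ I_n) X (Π_k ⊗ I_n)` induced by a measurement on the first
factor. -/
noncomputable def pinchA {m n : ℕ} (w : Fin m → Fin m → ℂ)
    (X : Matrix (Fin m × Fin n) (Fin m × Fin n) ℂ) :
    Matrix (Fin m × Fin n) (Fin m × Fin n) ℂ :=
  ∑ k, (projOf w k ⊗ₖ (1 : Matrix (Fin n) (Fin n) ℂ)) * X *
    (projOf w k ⊗ₖ (1 : Matrix (Fin n) (Fin n) ℂ))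

/-- Reduced state of the first factor of a bipartite state. -/
noncomputable def redA {m n : ℕ} (ρ : Matrix (Fin m × Fin n) (Fin m × Fin n) ℂ) :
    Matrix (Fin m) (Fin m) ℂ :=
  Matrix.of fun i i' => ∑ j, ρ (i, j) (i', j)

/-- The modified measurement-induced nonlocality `N_H(ρ_AB)`. -/
noncomputable def NH {m n : ℕ} (ρAB : Matrix (Fin m × Fin n) (Fin m × Fin n) ℂ) : ℝ :=
  sSup { r : ℝ | ∃ w : Fin m → Fin m → ℂ, IsVNM w ∧ FixesVNM w (redA ρAB) ∧
    r = hsNormSq (psdSqrt ρAB - pinchA w (psdSqrt ρAB)) }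
section Aux

open Matrix
open scoped Kronecker

set_option linter.unusedSectionVars false
variable {N : Type*} [Fintype N]

lemma trace_conjTranspose_mul_self_eq (X : Matrix N N ℂ) :
    Matrix.trace (Xᴴ * X) = ((∑ j, ∑ i, Complex.normSq (X i j) : ℝ) : ℂ) := by
  rw [Matrix.trace]
  push_cast
  refine Finset.sum_congr rfl fun j _ => ?_
  rw [Matrix.diag_apply, Matrix.mul_apply]
  refine Finset.sum_congr rfl fun i _ => ?_
  rw [Matrix.conjTranspose_apply, Complex.normSq_eq_conj_mul_self]; rfl

lemma hsNormSq_eq_sum (X : Matrix N N ℂ) :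
    hsNormSq X = ∑ j, ∑ i, Complex.normSq (X i j) := by
  rw [hsNormSq, trace_conjTranspose_mul_self_eq, Complex.ofReal_re]

lemma hsNormSq_nonneg (X : Matrix N N ℂ) : 0 ≤ hsNormSq X := by
  rw [hsNormSq_eq_sum]
  exact Finset.sum_nonneg fun j _ => Finset.sum_nonneg fun i _ => Complex.normSq_nonneg _

lemma trace_hs (X : Matrix N N ℂ) :
    Matrix.trace (Xᴴ * X) = (hsNormSq X : ℂ) := by
  rw [trace_conjTranspose_mul_self_eq, hsNormSq_eq_sum]

end Aux
section Aux2
set_option linter.unusedSectionVars false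

open Matrix
open scoped Kronecker

variable {N ι : Type*} [Fintype N] [DecidableEq N] [Fintype ι] [DecidableEq ι]

lemma pinch_inner (E : ι → Matrix N N ℂ) (hH : ∀ h, (E h)ᴴ = E h)
    (hO : ∀ h h', E h * E h' = if h = h' then E h else 0) (X : Matrix N N ℂ) :
    Matrix.trace ((∑ h, E h * X * E h)ᴴ * (∑ h, E h * X * E h))
      = Matrix.trace (Xᴴ * (∑ h, E h * X * E h)) := by
  rw [Matrix.conjTranspose_sum]
  simp only [Matrix.conjTranspose_mul, hH, Matrix.mul_assoc]
  rw [Finset.sum_mul_sum, Matrix.mul_sum]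
  rw [Matrix.trace_sum, Matrix.trace_sum]
  refine Finset.sum_congr rfl fun h _ => ?_
  rw [Matrix.trace_sum]
  rw [Finset.sum_eq_single h]
  · simp only [Matrix.mul_assoc]
    have hEE : E h * (E h * (X * E h)) = E h * (X * E h) := by
      rw [← Matrix.mul_assoc, hO, if_pos rfl]
    rw [hEE, Matrix.trace_mul_comm]
    simp only [Matrix.mul_assoc]
    rw [hO, if_pos rfl]
  · intro h' _ hne
    have hEE : E h * (E h' * (X * E h')) = 0 := by
      rw [← Matrix.mul_assoc, hO, if_neg (fun e => hne e.symm), Matrix.zero_mul]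
    simp only [Matrix.mul_assoc]
    rw [hEE]
    simp
  · intro hm; exact absurd (Finset.mem_univ h) hm

lemma pinch_sub_normSq (E : ι → Matrix N N ℂ) (hH : ∀ h, (E h)ᴴ = E h)
    (hO : ∀ h h', E h * E h' = if h = h' then E h else 0) (X : Matrix N N ℂ) :
    hsNormSq (X - ∑ h, E h * X * E h)
      = hsNormSq X - hsNormSq (∑ h, E h * X * E h) := by
  set P := ∑ h, E h * X * E h with hP
  have h1 : Matrix.trace (Xᴴ * P) = (hsNormSq P : ℂ) := by
    rw [← pinch_inner E hH hO X, ← hP, trace_hs]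
  have h2 : Matrix.trace (Pᴴ * X) = (hsNormSq P : ℂ) := by
    have h3 : (Xᴴ * P)ᴴ = Pᴴ * X := by
      rw [Matrix.conjTranspose_mul, Matrix.conjTranspose_conjTranspose]
    rw [← h3, Matrix.trace_conjTranspose, h1]
    simp
  have hexp : (X - P)ᴴ * (X - P) = Xᴴ * X - Xᴴ * P - (Pᴴ * X - Pᴴ * P) := by
    rw [Matrix.conjTranspose_sub]
    noncomm_ring
  rw [hsNormSq, hexp, Matrix.trace_sub, Matrix.trace_sub, Matrix.trace_sub, h1, h2,
    trace_hs, trace_hs]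
  simp only [Complex.sub_re, Complex.ofReal_re]
  ring_nf

end Aux2
section Aux3
set_option linter.unusedSectionVars false

open Matrix
open scoped Kronecker

variable {N : Type*} [Fintype N] [DecidableEq N]

lemma projOf_conjTranspose (u : N → N → ℂ) (h : N) : (projOf u h)ᴴ = projOf u h := by
  ext i j
  simp only [projOf, outer, Matrix.conjTranspose_apply, Matrix.vecMulVec_apply, Pi.star_apply,
    star_mul', star_star]
  ring

lemma projOf_mul_projOf {u : N → N → ℂ} (hu : IsVNM u) (h h' : N) :
    projOf u h * projOf u h' = if h = h' then projOf u h else 0 := by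
  have key := hu h h'
  ext i j
  rw [Matrix.mul_apply]
  simp only [projOf, outer, Matrix.vecMulVec_apply, Pi.star_apply]
  have : ∑ k, u h i * star (u h k) * (u h' k * star (u h' j))
      = (u h i * star (u h' j)) * ∑ k, star (u h k) * u h' k := by
    rw [Finset.mul_sum]; exact Finset.sum_congr rfl fun k _ => by ring
  rw [this, show (∑ k, star (u h k) * u h' k) = cInner (u h) (u h') from rfl, key]
  split_ifs with hc
  · subst hc; simp [Matrix.vecMulVec_apply]
  · simp

lemma ampMid_conjTranspose {m v n u : ℕ} (P : Matrix (Fin n × Fin u) (Fin n × Fin u) ℂ) :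
    (ampMid m v P)ᴴ = ampMid m v Pᴴ := by
  ext p q
  simp only [ampMid, Matrix.conjTranspose_apply, Matrix.of_apply, star_mul']
  split_ifs <;> simp_all

lemma ampMid_zero {m v n u : ℕ} :
    ampMid m v (0 : Matrix (Fin n × Fin u) (Fin n × Fin u) ℂ) = 0 := by
  ext p q
  simp [ampMid]

lemma ampMid_mul {m v n u : ℕ} (P Q : Matrix (Fin n × Fin u) (Fin n × Fin u) ℂ) :
    ampMid m v P * ampMid m v Q = ampMid m v (P * Q) := by
  ext p q
  rw [Matrix.mul_apply]
  simp only [ampMid, Matrix.of_apply, Fintype.sum_prod_type]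
  simp only [ite_mul, mul_ite, one_mul, mul_one, zero_mul, mul_zero,
    Finset.sum_ite_eq, Finset.sum_ite_eq', Finset.mem_univ, if_true,
    Finset.sum_const_zero]
  rw [Matrix.mul_apply, Fintype.sum_prod_type]
  split_ifs with h1 h2
  · rw [Finset.sum_eq_single q.1.1]
    · simp [h2]
    · intro b _ hb; simp [hb]
    · intro hm; exact absurd (Finset.mem_univ _) hm
  · refine Finset.sum_eq_zero fun b _ => ?_
    by_cases hb : b = q.1.1
    · simp [hb, h2]
    · simp [hb]
  · simp

end Aux3
section Aux4
set_option linter.unusedSectionVars false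

open Matrix
open scoped Kronecker

lemma kron_conjTranspose {M N : Type*} [Fintype M] [Fintype N]
    (A : Matrix M M ℂ) (B : Matrix N N ℂ) : (A ⊗ₖ B)ᴴ = Aᴴ ⊗ₖ Bᴴ := by
  ext p q
  simp only [Matrix.kroneckerMap_apply, Matrix.conjTranspose_apply, star_mul']

lemma kron_sum_sum {M N κ κ' : Type*} [Fintype M] [Fintype N] [Fintype κ] [Fintype κ']
    (A : κ → Matrix M M ℂ) (B : κ' → Matrix N N ℂ) :
    ∑ k : κ, ∑ k' : κ', (A k) ⊗ₖ (B k') = (∑ k, A k) ⊗ₖ (∑ k', B k') := by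
  ext p q
  simp only [Matrix.sum_apply, Matrix.kroneckerMap_apply, Finset.sum_mul_sum]

lemma trace_kron_inner {M N : Type*} [Fintype M] [Fintype N]
    (A C : Matrix M M ℂ) (B D : Matrix N N ℂ) :
    Matrix.trace ((A ⊗ₖ B)ᴴ * (C ⊗ₖ D))
      = Matrix.trace (Aᴴ * C) * Matrix.trace (Bᴴ * D) := by
  rw [kron_conjTranspose, ← Matrix.mul_kronecker_mul, Matrix.trace_kronecker]

lemma hsNormSq_kron {M N : Type*} [Fintype M] [Fintype N]
    (A : Matrix M M ℂ) (B : Matrix N N ℂ) :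
    hsNormSq (A ⊗ₖ B) = hsNormSq A * hsNormSq B := by
  have h := trace_kron_inner A A B B
  rw [trace_hs, trace_hs, trace_hs] at h
  have : ((hsNormSq (A ⊗ₖ B) : ℂ)) = ((hsNormSq A * hsNormSq B : ℝ) : ℂ) := by
    rw [h]; push_cast; ring
  exact_mod_cast this

lemma posSemidef_kron {M N : Type*} [Fintype M] [Fintype N] [DecidableEq M] [DecidableEq N]
    {A : Matrix M M ℂ} {B : Matrix N N ℂ} (hA : A.PosSemidef) (hB : B.PosSemidef) :
    (A ⊗ₖ B).PosSemidef := by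
  exact hA.kronecker hB

open scoped MatrixOrder in
lemma psdSqrt_of_posSemidef {N : Type*} [Fintype N] [DecidableEq N]
    {A : Matrix N N ℂ} (hA : A.PosSemidef) : psdSqrt A = CFC.sqrt A := by
  rw [psdSqrt, dif_pos hA, CFC.sqrt_eq_cfc, cfc_nnreal_eq_real _ A hA.nonneg, hA.1.cfc_eq,
    IsHermitian.cfc, Unitary.conjStarAlgAut_apply]
  congr 2
  have key : ∀ x : ℝ, √(max x 0) = √x := fun x => by
    rcases le_total x 0 with h | h
    · simp [h, Real.sqrt_eq_zero'.mpr h]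
    · simp [h]
  ext i j
  simp only [diagonal_apply, Function.comp_apply, Real.coe_sqrt, Real.coe_toNNReal', key]
  rfl

lemma psdSqrt_kron {M N : Type*} [Fintype M] [Fintype N] [DecidableEq M] [DecidableEq N]
    {A : Matrix M M ℂ} {B : Matrix N N ℂ} (hA : A.PosSemidef) (hB : B.PosSemidef) :
    psdSqrt (A ⊗ₖ B) = psdSqrt A ⊗ₖ psdSqrt B := by
  have hK : (A ⊗ₖ B).PosSemidef := posSemidef_kron hA hB
  rw [psdSqrt_of_posSemidef hA, psdSqrt_of_posSemidef hB, psdSqrt_of_posSemidef hK]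
  open scoped MatrixOrder in
  exact CFC.sqrt_unique (by rw [← Matrix.mul_kronecker_mul, CFC.sqrt_mul_sqrt_self A hA.nonneg,
    CFC.sqrt_mul_sqrt_self B hB.nonneg])
    (posSemidef_kron (CFC.sqrt_nonneg A).posSemidef (CFC.sqrt_nonneg B).posSemidef).nonneg

lemma hsNormSq_psdSqrt {N : Type*} [Fintype N] [DecidableEq N]
    {A : Matrix N N ℂ} (hA : A.PosSemidef) :
    (hsNormSq (psdSqrt A) : ℂ) = Matrix.trace A := by
  rw [← trace_hs, psdSqrt_of_posSemidef hA]
  open scoped MatrixOrder in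
  conv_lhs => rw [(CFC.sqrt_nonneg A).posSemidef.1]
  open scoped MatrixOrder in
  rw [CFC.sqrt_mul_sqrt_self A hA.nonneg]

end Aux4
section Aux5
set_option linter.unusedSectionVars false

open Matrix
open scoped Kronecker

lemma ampMid_kron {m v n u : ℕ} (A : Matrix (Fin n) (Fin n) ℂ) (B : Matrix (Fin u) (Fin u) ℂ) :
    ampMid m v (A ⊗ₖ B)
      = ((1 : Matrix (Fin m) (Fin m) ℂ) ⊗ₖ A) ⊗ₖ (B ⊗ₖ (1 : Matrix (Fin v) (Fin v) ℂ)) := by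
  ext p q
  simp only [ampMid, Matrix.of_apply, Matrix.kroneckerMap_apply, Matrix.one_apply]
  split_ifs <;> ring

lemma pinchBC_normSq_eq {m n u v : ℕ} {w : (Fin n × Fin u) → (Fin n × Fin u) → ℂ} (hw : IsVNM w)
    (X : Matrix ((Fin m × Fin n) × Fin u × Fin v) ((Fin m × Fin n) × Fin u × Fin v) ℂ) :
    hsNormSq (X - pinchBC w X) = hsNormSq X - hsNormSq (pinchBC w X) := by
  unfold pinchBC
  refine pinch_sub_normSq _ ?_ ?_ X
  · intro h; rw [ampMid_conjTranspose, projOf_conjTranspose]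
  · intro h h'
    rw [ampMid_mul, projOf_mul_projOf hw]
    split_ifs <;> simp [ampMid_zero]

lemma pinchA_normSq_eq {m n : ℕ} {w : Fin m → Fin m → ℂ} (hw : IsVNM w)
    (X : Matrix (Fin m × Fin n) (Fin m × Fin n) ℂ) :
    hsNormSq (X - pinchA w X) = hsNormSq X - hsNormSq (pinchA w X) := by
  unfold pinchA
  refine pinch_sub_normSq _ ?_ ?_ X
  · intro k; rw [kron_conjTranspose, projOf_conjTranspose, Matrix.conjTranspose_one]
  · intro k k'
    rw [← Matrix.mul_kronecker_mul, Matrix.one_mul, projOf_mul_projOf hw]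
    split_ifs <;> simp [Matrix.zero_kronecker]

end Aux5
/-- `N_H^b(ρ_BA ⊗ ρ_AB) ≥ N_H(ρ_AB)`. -/
theorem stmt10 {m n : ℕ}
    (ρAB : Matrix (Fin m × Fin n) (Fin m × Fin n) ℂ) (hAB : IsDensity ρAB)
    (ρBA : Matrix (Fin n × Fin m) (Fin n × Fin m) ℂ)
    (hBA : ρBA = Matrix.of fun p q => ρAB (p.2, p.1) (q.2, q.1)) :
    NH ρAB ≤ NHb ρBA ρAB := by
  classical
  obtain ⟨hPSD, htr⟩ := hAB
  have hBApsd : ρBA.PosSemidef := by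
    have h : ρBA = ρAB.submatrix Prod.swap Prod.swap := by rw [hBA]; rfl
    rw [h]; exact hPSD.submatrix _
  have hBAtr : Matrix.trace ρBA = 1 := by
    calc Matrix.trace ρBA = ∑ j : Fin n, ∑ i : Fin m, ρAB (i, j) (i, j) := by
          rw [hBA, Matrix.trace, Fintype.sum_prod_type]; rfl
      _ = ∑ i : Fin m, ∑ j : Fin n, ρAB (i, j) (i, j) := Finset.sum_comm
      _ = Matrix.trace ρAB := by rw [Matrix.trace, Fintype.sum_prod_type]; rfl
      _ = 1 := htr
  set S1 := psdSqrt ρBA with hS1def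
  set S2 := psdSqrt ρAB with hS2def
  have hXeq : psdSqrt (ρBA ⊗ₖ ρAB) = S1 ⊗ₖ S2 := psdSqrt_kron hBApsd hPSD
  have hS1 : hsNormSq S1 = 1 := by
    have h := hsNormSq_psdSqrt hBApsd
    rw [hBAtr] at h
    exact_mod_cast h
  rw [NH, NHb]
  have hbdd : BddAbove {r : ℝ | ∃ w : (Fin m × Fin m) → (Fin m × Fin m) → ℂ,
      IsVNM w ∧ FixesVNM w (redB ρBA ⊗ₖ redC ρAB) ∧
      r = hsNormSq (psdSqrt (ρBA ⊗ₖ ρAB) - pinchBC w (psdSqrt (ρBA ⊗ₖ ρAB)))} := by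
    refine ⟨hsNormSq (psdSqrt (ρBA ⊗ₖ ρAB)), ?_⟩
    rintro r ⟨w', hw', -, rfl⟩
    rw [pinchBC_normSq_eq hw']
    have h0 := hsNormSq_nonneg (pinchBC w' (psdSqrt (ρBA ⊗ₖ ρAB)))
    linarith
  apply Real.sSup_le
  · rintro r ⟨w, hw, hfix, rfl⟩
    set W : (Fin m × Fin m) → (Fin m × Fin m) → ℂ :=
      fun h p => w h.1 p.1 * w h.2 p.2 with hWdef
    have hprojW : ∀ k k', projOf W (k, k') = projOf w k ⊗ₖ projOf w k' := by
      intro k k'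
      ext ⟨i, i'⟩ ⟨j, j'⟩
      show W (k, k') (i, i') * star (W (k, k') (j, j'))
        = (w k i * star (w k j)) * (w k' i' * star (w k' j'))
      show (w k i * w k' i') * star (w k j * w k' j') = _
      rw [star_mul']
      ring
    have hWvnm : IsVNM W := by
      intro a b
      have h : cInner (W a) (W b) = cInner (w a.1) (w b.1) * cInner (w a.2) (w b.2) := by
        simp only [cInner]
        rw [Fintype.sum_prod_type, Finset.sum_mul_sum]
        refine Finset.sum_congr rfl fun i _ => Finset.sum_congr rfl fun j _ => ?_
        show star (W a (i, j)) * W b (i, j) = _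
        show star (w a.1 i * w a.2 j) * (w b.1 i * w b.2 j) = _
        rw [star_mul']
        ring
      rw [h, hw, hw]
      rcases a with ⟨a1, a2⟩
      rcases b with ⟨b1, b2⟩
      by_cases h1 : a1 = b1 <;> by_cases h2 : a2 = b2 <;> simp [h1, h2, Prod.ext_iff]
    have hredB : redB ρBA = redA ρAB := by
      ext j j'; simp [redB, redA, hBA]
    have hredC : redC ρAB = redA ρAB := by
      ext i i'; simp [redC, redA]
    have hfix' : ∑ k, projOf w k * redA ρAB * projOf w k = redA ρAB := hfix
    have hWfix : FixesVNM W (redB ρBA ⊗ₖ redC ρAB) := by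
      show ∑ h, projOf W h * (redB ρBA ⊗ₖ redC ρAB) * projOf W h = _
      rw [hredB, hredC, Fintype.sum_prod_type]
      calc ∑ k, ∑ k', projOf W (k, k') * (redA ρAB ⊗ₖ redA ρAB) * projOf W (k, k')
          = ∑ k, ∑ k', (projOf w k * redA ρAB * projOf w k)
              ⊗ₖ (projOf w k' * redA ρAB * projOf w k') := by
            refine Finset.sum_congr rfl fun k _ => Finset.sum_congr rfl fun k' _ => ?_
            rw [hprojW, ← Matrix.mul_kronecker_mul, ← Matrix.mul_kronecker_mul]
        _ = redA ρAB ⊗ₖ redA ρAB := by rw [kron_sum_sum, hfix']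
    refine le_trans ?_ (le_csSup hbdd ⟨W, hWvnm, hWfix, rfl⟩)
    set S1' := ∑ k, ((1 : Matrix (Fin n) (Fin n) ℂ) ⊗ₖ projOf w k) * S1 *
      ((1 : Matrix (Fin n) (Fin n) ℂ) ⊗ₖ projOf w k) with hS1'def
    have hdecomp : pinchBC W (S1 ⊗ₖ S2) = S1' ⊗ₖ pinchA w S2 := by
      show ∑ h, ampMid n n (projOf W h) * (S1 ⊗ₖ S2) * ampMid n n (projOf W h) = _
      rw [hS1'def, pinchA, ← kron_sum_sum, Fintype.sum_prod_type]
      refine Finset.sum_congr rfl fun k _ => Finset.sum_congr rfl fun k' _ => ?_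
      rw [hprojW, ampMid_kron, ← Matrix.mul_kronecker_mul, ← Matrix.mul_kronecker_mul]
    have hmid : hsNormSq (S1 - S1') = hsNormSq S1 - hsNormSq S1' := by
      rw [hS1'def]
      refine pinch_sub_normSq _ ?_ ?_ S1
      · intro k; rw [kron_conjTranspose, Matrix.conjTranspose_one, projOf_conjTranspose]
      · intro k k'
        rw [← Matrix.mul_kronecker_mul, Matrix.one_mul, projOf_mul_projOf hw]
        split_ifs <;> simp [Matrix.kronecker_zero]
    have hp1le : hsNormSq S1' ≤ 1 := by
      have h0 := hsNormSq_nonneg (S1 - S1')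
      rw [hmid, hS1] at h0
      linarith
    have hp2ge : 0 ≤ hsNormSq (pinchA w S2) := hsNormSq_nonneg _
    have hLHS : hsNormSq (S2 - pinchA w S2) = hsNormSq S2 - hsNormSq (pinchA w S2) :=
      pinchA_normSq_eq hw S2
    have hRHS : hsNormSq (psdSqrt (ρBA ⊗ₖ ρAB) - pinchBC W (psdSqrt (ρBA ⊗ₖ ρAB)))
        = hsNormSq S1 * hsNormSq S2 - hsNormSq S1' * hsNormSq (pinchA w S2) := by
      rw [hXeq, pinchBC_normSq_eq hWvnm, hdecomp, hsNormSq_kron, hsNormSq_kron]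
    rw [hLHS, hRHS, hS1, one_mul]
    nlinarith [hsNormSq_nonneg S1']
  · apply Real.sSup_nonneg
    rintro r ⟨w', hw', -, rfl⟩
    exact hsNormSq_nonneg _
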